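/- arXiv:2209.12963 — 3 statements merged into one kernel-verified Lean document; each statement's English description precedes it below -/
import Mathlib

section
/- (Validity of subset row inequalities for integer solutions.) Let S be a finite set (the customer subset N_δ of the SRI), m a positive natural number, L a finite set (of routes), x : L → ℕ (the number of times each route is selected), and a : S × L → ℕ (the number of times route l covers customer u). If Σ_{l ∈ L} x_l · a(u, l) ≤ 1 for every u ∈ S, then Σ_{l ∈ L} x_l · ⌊(Σ_{u ∈ S} a(u, l)) / m⌋ ≤ ⌊|S| / m⌋. -/
/-- Validity of subset row inequalities for integer solutions: if each customer `u ∈ S`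
is covered at most once by the selected routes, then
`∑ l ∈ L, x l * (∑ u ∈ S, a u l) / m ≤ |S| / m` (natural-number division). -/
theorem sri_valid {σ ρ : Type*} (S : Finset σ) (L : Finset ρ) (m : ℕ) (hm : 0 < m)
    (x : ρ → ℕ) (a : σ → ρ → ℕ)
    (hcov : ∀ u ∈ S, ∑ l ∈ L, x l * a u l ≤ 1) :
    ∑ l ∈ L, x l * ((∑ u ∈ S, a u l) / m) ≤ S.card / m := by
  rw [Nat.le_div_iff_mul_le hm]
  calc (∑ l ∈ L, x l * ((∑ u ∈ S, a u l) / m)) * m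
      = ∑ l ∈ L, x l * (((∑ u ∈ S, a u l) / m) * m) := by
        rw [Finset.sum_mul]; simp [mul_assoc]
    _ ≤ ∑ l ∈ L, x l * (∑ u ∈ S, a u l) :=
        Finset.sum_le_sum fun l _ => Nat.mul_le_mul_left _ (Nat.div_mul_le_self _ _)
    _ = ∑ u ∈ S, ∑ l ∈ L, x l * a u l := by
        rw [Finset.sum_comm]; simp [Finset.mul_sum]
    _ ≤ ∑ u ∈ S, 1 := Finset.sum_le_sum hcov
    _ = S.card := by simp
end

section
/- (Validity of LA-subset-row inequalities for integer solutions.) Let S be a finite set (the customer subset N_δ of the SRI), m a positive natural number, L a finite set (of routes), x : L → ℕ (the number of times each route is selected), and a : S × L → ℕ (the number of times route l covers customer u) with Σ_{l ∈ L} x_l · a(u, l) ≤ 1 for every u ∈ S. Suppose further that each l ∈ L is equipped with a finite set P_l (the LA-arcs of route l) and counts b_l : P_l → ℕ (the number of customers of S covered by each arc) satisfying Σ_{p ∈ P_l} b_l(p) ≤ Σ_{u ∈ S} a(u, l). Then Σ_{l ∈ L} x_l · Σ_{p ∈ P_l} ⌊b_l(p) / m⌋ ≤ ⌊|S| / m⌋.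 -/
/-- Validity of LA-subset-row inequalities for integer solutions: if each customer `u ∈ S`
is covered at most once by the selected routes, and for each route `l` the total count of
`S`-customers covered by its LA-arcs is at most the total coverage of `S` by `l`, then
`∑ l ∈ L, x l * ∑ p ∈ P l, (b l p / m) ≤ |S| / m` (natural-number division). -/
theorem lasri_valid {σ ρ π : Type*} (S : Finset σ) (L : Finset ρ) (m : ℕ) (hm : 0 < m)
    (x : ρ → ℕ) (a : σ → ρ → ℕ)
    (hcov : ∀ u ∈ S, ∑ l ∈ L, x l * a u l ≤ 1)
    (P : ρ → Finset π) (b : ρ → π → ℕ)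
    (hb : ∀ l ∈ L, ∑ p ∈ P l, b l p ≤ ∑ u ∈ S, a u l) :
    ∑ l ∈ L, x l * ∑ p ∈ P l, (b l p / m) ≤ S.card / m := by
  rw [Nat.le_div_iff_mul_le hm]
  calc (∑ l ∈ L, x l * ∑ p ∈ P l, (b l p / m)) * m
      = ∑ l ∈ L, x l * ∑ p ∈ P l, (b l p / m * m) := by
        rw [Finset.sum_mul]
        exact Finset.sum_congr rfl fun l _ => by rw [mul_assoc, Finset.sum_mul]
    _ ≤ ∑ l ∈ L, x l * ∑ u ∈ S, a u l :=
        Finset.sum_le_sum fun l hl => Nat.mul_le_mul_left _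
          ((Finset.sum_le_sum fun p _ => Nat.div_mul_le_self _ _).trans (hb l hl))
    _ = ∑ u ∈ S, ∑ l ∈ L, x l * a u l := by
        simp_rw [Finset.mul_sum]; rw [Finset.sum_comm]
    _ ≤ ∑ u ∈ S, 1 := Finset.sum_le_sum hcov
    _ = S.card := by simp
end

section
/- (Existence of a positive-flow source-to-sink path in a DAG.) Let V be a finite type, s, t ∈ V distinct, and f : V → V → ℝ with f(i, j) ≥ 0 for all i, j. Suppose the positive-support relation i → j defined by f(i, j) > 0 admits no directed cycle (i.e., there is no nonempty sequence of positive-support steps returning to its starting vertex). Suppose flow conservation holds at every vertex other than s and t: Σ_{j} f(j, i) = Σ_{j} f(i, j) for all i ∉ {s, t}; that s has no inflow: Σ_j f(j, s) = 0; and that s has positive outflow: Σ_{j} f(s, j) > 0. Then there exists a finite sequence of vertices s = v_0, v_1, …, v_k = t with f(v_{i−1}, v_i) > 0 for every i = 1, …, k. -/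
/-- Existence of a positive-flow source-to-sink path in a DAG: if the nonnegative flow
`f` has acyclic positive support, satisfies flow conservation away from `s` and `t`,
`s` has no inflow and positive outflow, then there is a path from `s` to `t` all of
whose steps carry positive flow. -/
theorem flow_decomposition_path {V : Type*} [Fintype V] (s t : V) (hst : s ≠ t)
    (f : V → V → ℝ) (hf : ∀ i j, 0 ≤ f i j)
    (hacyc : ¬∃ (k : ℕ) (v : ℕ → V), 0 < k ∧ v 0 = v k ∧
      ∀ i < k, 0 < f (v i) (v (i + 1)))
    (hcons : ∀ i, i ≠ s → i ≠ t → ∑ j, f j i = ∑ j, f i j)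
    (hsin : ∑ j, f j s = 0)
    (hsout : 0 < ∑ j, f s j) :
    ∃ (k : ℕ) (v : ℕ → V), v 0 = s ∧ v k = t ∧ ∀ i < k, 0 < f (v i) (v (i + 1)) := by
  classical
  set P : ℕ → Prop := fun n => ∃ v : ℕ → V, v 0 = s ∧
      (∀ i < n, 0 < f (v i) (v (i + 1))) ∧ ∀ i ≤ n, v i ≠ t with hPdef
  have hP0 : P 0 := ⟨fun _ => s, rfl, by omega, fun i _ => hst⟩
  have hnot : ¬ P (Fintype.card V) := by
    rintro ⟨v, hv0, hedge, hne⟩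
    set N := Fintype.card V
    have hinj : ∀ i j : ℕ, i ≤ N → j ≤ N → i < j → v i ≠ v j := by
      intro i j hi hj hij heq
      exact hacyc ⟨j - i, fun m => v (i + m), by omega, by
        simp only [Nat.add_zero, Nat.add_sub_cancel' (le_of_lt hij)]; exact heq,
        fun m hm => by
          have := hedge (i + m) (by omega)
          simpa [Nat.add_assoc] using this⟩
    have : Function.Injective (fun i : Fin (N + 1) => v i) := by
      intro a b hab
      by_contra hne'
      rcases lt_or_gt_of_ne (fun h : a = b => hne' h) with h | h
      · exact hinj a b (by omega) (by omega) h hab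
      · exact hinj b a (by omega) (by omega) h hab.symm
    have := Fintype.card_le_of_injective _ this
    simp [N] at this
  have hex : ∃ n, ¬ P n := ⟨Fintype.card V, hnot⟩
  set n₀ := Nat.find hex with hn₀
  have hn₀pos : 0 < n₀ := by
    rcases Nat.eq_zero_or_pos n₀ with h | h
    · exact absurd hP0 (by rw [← h]; exact Nat.find_spec hex)
    · exact h
  set n := n₀ - 1 with hn
  have hPn : P n := by
    by_contra hc
    have hlt : n < n₀ := by omega
    exact absurd (Nat.find_min hex hlt) (by simpa using hc)
  have hPn1 : ¬ P (n + 1) := by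
    have : n + 1 = n₀ := by omega
    rw [this]; exact Nat.find_spec hex
  obtain ⟨v, hv0, hedge, hne⟩ := hPn
  -- v n has positive outflow
  have hout : 0 < ∑ j, f (v n) j := by
    rcases Nat.eq_zero_or_pos n with h | h
    · rw [h, hv0]; exact hsout
    · have hlast : 0 < f (v (n - 1)) (v n) := by
        have := hedge (n - 1) (by omega)
        have hh : n - 1 + 1 = n := by omega
        rwa [hh] at this
      have hvns : v n ≠ s := by
        intro heq
        have hz : f (v (n - 1)) (v n) = 0 := by
          rw [heq]
          exact (Finset.sum_eq_zero_iff_of_nonneg (fun j _ => hf j s)).1 hsin _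
            (Finset.mem_univ _)
        linarith
      have hin : 0 < ∑ j, f j (v n) := by
        calc 0 < f (v (n - 1)) (v n) := hlast
        _ ≤ ∑ j, f j (v n) :=
          Finset.single_le_sum (fun j _ => hf j (v n)) (Finset.mem_univ _)
      rw [← hcons (v n) hvns (hne n le_rfl)]; exact hin
  obtain ⟨j, hj⟩ : ∃ j, 0 < f (v n) j := by
    by_contra hc
    push_neg at hc
    have : ∑ j, f (v n) j ≤ 0 := Finset.sum_nonpos (fun j _ => hc j)
    linarith
  set w : ℕ → V := fun m => if m ≤ n then v m else j with hw
  have hw0 : w 0 = s := by simp [hw, hv0]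
  have hwpath : ∀ i < n + 1, 0 < f (w i) (w (i + 1)) := by
    intro i hi
    rcases lt_or_eq_of_le (Nat.lt_succ_iff.1 hi) with h | h
    · have h1 : w i = v i := by simp [hw, le_of_lt h]
      have h2 : w (i + 1) = v (i + 1) := by
        have h' : i + 1 ≤ n := h
        simp [hw, h']
      rw [h1, h2]; exact hedge i h
    · have h1 : w i = v n := by simp [hw, h]
      have h2 : w (i + 1) = j := by simp [hw, h]
      rw [h1, h2]; exact hj
  have : ∃ i ≤ n + 1, w i = t := by
    by_contra hc
    push_neg at hc
    exact hPn1 ⟨w, hw0, hwpath, hc⟩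
  obtain ⟨i, hi, hit⟩ := this
  have hin1 : i = n + 1 := by
    by_contra hne'
    have hi' : i ≤ n := by omega
    have : w i = v i := by simp [hw, hi']
    exact hne i hi' (this ▸ hit)
  exact ⟨n + 1, w, hw0, by rw [← hin1]; exact hit, hwpath⟩
end
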